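/- (Maximum principle, Lemma 4.1, smooth periodic version.) Let a, b ∈ ℝ, c > 0 and T > 0. Let u : ℝ³×[0,T] → ℝ³ and Q : ℝ³×[0,T] → 𝒮₀ be smooth, ℤ³-periodic in the space variable, with ∑_α ∂_αu_α = 0, and satisfying ∂_tQ + u·∇Q − ωQ + Qω = ΔQ − f_LdG(Q) on ℝ³×(0,T], where ω := (∇u − (∇u)ᵀ)/2. Then for every (x,t) ∈ ℝ³×[0,T]: |Q(x,t)| ≤ max{ sup_{y∈ℝ³} |Q(y,0)| , √( max( b²/c² − 2a/c , 0) ) }. -/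

import Mathlib

noncomputable section
open Matrix Set

/-- Euclidean 3-space. -/
abbrev E3 : Type := EuclideanSpace ℝ (Fin 3)
/-- Real 3×3 matrices. -/
abbrev M3 : Type := Matrix (Fin 3) (Fin 3) ℝ

/-- Spatial partial derivative `∂_α f` of a scalar function on `ℝ³ × ℝ`. -/
def pdx (α : Fin 3) (f : E3 × ℝ → ℝ) (p : E3 × ℝ) : ℝ :=
  fderiv ℝ (fun y => f (y, p.2)) p.1 (EuclideanSpace.single α 1)

/-- Time derivative `∂_t f` of a scalar function on `ℝ³ × ℝ`. -/
def pdt (f : E3 × ℝ → ℝ) (p : E3 × ℝ) : ℝ := deriv (fun s => f (p.1, s)) p.2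

/-- Spatial Laplacian `Δf` of a scalar function on `ℝ³ × ℝ`. -/
def lapx (f : E3 × ℝ → ℝ) (p : E3 × ℝ) : ℝ := ∑ α, pdx α (fun q => pdx α f q) p

/-- The Landau–De Gennes bulk force
`f_LdG(Q) = aQ − b(Q² − (tr(Q²)/3)I₃) + c·tr(Q²)·Q`. -/
def fLdG (a b c : ℝ) (Q : M3) : M3 :=
  a • Q - b • (Q * Q - ((Q * Q).trace / 3) • (1 : M3)) + (c * (Q * Q).trace) • Q

/-- Vorticity `ω = (∇u − (∇u)ᵀ)/2`, with `(∇u)_{αβ} = ∂_β u_α`. -/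
def omg (u : E3 × ℝ → Fin 3 → ℝ) (p : E3 × ℝ) (α β : Fin 3) : ℝ :=
  (pdx β (fun q => u q α) p - pdx α (fun q => u q β) p) / 2

/-- The integer translation vector associated with `k ∈ ℤ³`. -/
def intVec (k : Fin 3 → ℤ) : E3 := ∑ i, (k i : ℝ) • EuclideanSpace.single i (1 : ℝ)

/- ===== auxiliary lemmas ===== -/
open Filter Topology

lemma aux_deriv2_nonpos {g g' : ℝ → ℝ} {d : ℝ}
    (hg : ∀ s, HasDerivAt g (g' s) s) (hg' : HasDerivAt g' d 0)
    (hmax : ∀ s, g s ≤ g 0) : g' 0 = 0 ∧ d ≤ 0 := by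
  have hloc : IsLocalMax g 0 := Filter.Eventually.of_forall hmax
  have h0 : g' 0 = 0 := by rw [← (hg 0).deriv]; exact hloc.deriv_eq_zero
  refine ⟨h0, ?_⟩
  by_contra hd
  push_neg at hd
  have hslope : Tendsto (slope g' 0) (𝓝[>] 0) (𝓝 d) :=
    (hasDerivAt_iff_tendsto_slope.mp hg').mono_left
      (nhdsWithin_mono _ (fun s hs => ne_of_gt hs))
  have hev : ∀ᶠ s in 𝓝[>] (0:ℝ), 0 < g' s := by
    filter_upwards [hslope.eventually_const_lt hd, self_mem_nhdsWithin] with s hs hs'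
    rw [slope_def_field, h0, sub_zero, sub_zero] at hs
    rcases div_pos_iff.mp hs with ⟨h1, _⟩ | ⟨_, h2⟩
    · exact h1
    · exact absurd hs' (by simpa using le_of_lt h2)
  rw [eventually_nhdsWithin_iff, Metric.eventually_nhds_iff] at hev
  obtain ⟨δ, hδ, hδ'⟩ := hev
  have hmono : StrictMonoOn g (Icc 0 (δ/2)) := by
    refine strictMonoOn_of_deriv_pos (convex_Icc _ _)
      (fun s _ => (hg s).continuousAt.continuousWithinAt) (fun s hs => ?_)
    rw [interior_Icc] at hs
    rw [(hg s).deriv]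
    exact hδ' (by rw [Real.dist_eq, sub_zero, abs_of_pos hs.1]; linarith [hs.2]) hs.1
  have : g 0 < g (δ/2) :=
    hmono (left_mem_Icc.mpr (by linarith)) (right_mem_Icc.mpr (by linarith)) (by linarith)
  exact absurd (hmax (δ/2)) (not_le.mpr this)

lemma aux_left_deriv_ge {f : ℝ → ℝ} {d ε t₀ : ℝ} (ht : 0 < t₀)
    (hf : HasDerivAt f d t₀) (h : ∀ s ∈ Icc 0 t₀, f s - ε * s ≤ f t₀ - ε * t₀) : ε ≤ d := by
  have hne : (𝓝[Ioo 0 t₀] t₀).NeBot := right_nhdsWithin_Ioo_neBot ht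
  have hslope : Tendsto (slope f t₀) (𝓝[Ioo 0 t₀] t₀) (𝓝 d) :=
    (hasDerivAt_iff_tendsto_slope.mp hf).mono_left
      (nhdsWithin_mono _ (fun s hs => ne_of_lt hs.2))
  refine ge_of_tendsto hslope ?_
  filter_upwards [self_mem_nhdsWithin] with s hs
  have h1 := h s ⟨le_of_lt hs.1, le_of_lt hs.2⟩
  have h2 : s - t₀ < 0 := by linarith [hs.2]
  rw [slope_def_field, le_div_iff_of_neg h2]
  linarith

lemma aux_line_hasDerivAt (x₀ v : E3) (s₀ : ℝ) :
    HasDerivAt (fun s : ℝ => x₀ + s • v) v s₀ := by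
  simpa using ((hasDerivAt_id s₀).smul_const v).const_add x₀

lemma aux_dF_contDiffAt {F : E3 → ℝ} {y : E3} (hF : ContDiffAt ℝ 2 F y) (v : E3) :
    ContDiffAt ℝ 1 (fun z => fderiv ℝ F z v) y :=
  (hF.fderiv_right (by norm_num)).clm_apply contDiffAt_const

lemma aux_sq_fderiv {g : E3 → ℝ} {y : E3} (hg : DifferentiableAt ℝ g y) :
    fderiv ℝ (fun z => (g z)^2) y = (2 * g y) • fderiv ℝ g y := by
  have h : (fun z => (g z)^2) = fun z => g z * g z := by ext z; ring
  rw [h, fderiv_fun_mul hg hg]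
  ext w
  simp [smul_eq_mul]
  ring

lemma aux_sumsq_fderiv {ι : Type*} [Fintype ι] {g : ι → E3 → ℝ} {y : E3}
    (hg : ∀ i, DifferentiableAt ℝ (g i) y) (v : E3) :
    fderiv ℝ (fun z => ∑ i, (g i z)^2) y v = ∑ i, 2 * g i y * fderiv ℝ (g i) y v := by
  rw [fderiv_fun_sum (fun i _ => ((hg i).fun_mul (hg i)).congr_of_eventuallyEq
    (Filter.Eventually.of_forall (fun z => by ring)))]
  simp only [ContinuousLinearMap.sum_apply]
  refine Finset.sum_congr rfl (fun i _ => ?_)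
  have := congrFun (congrArg DFunLike.coe (aux_sq_fderiv (hg i))) v
  simpa [smul_eq_mul, mul_assoc] using this

lemma aux_sumsq_fderiv2 {ι : Type*} [Fintype ι] {g : ι → E3 → ℝ} {y : E3}
    (hg : ∀ i z, ContDiffAt ℝ 2 (g i) z) (v : E3) :
    fderiv ℝ (fun z => fderiv ℝ (fun w => ∑ i, (g i w)^2) z v) y v
      = ∑ i, (2 * (fderiv ℝ (g i) y v)^2
          + 2 * g i y * fderiv ℝ (fun z => fderiv ℝ (g i) z v) y v) := by
  have hfun : (fun z => fderiv ℝ (fun w => ∑ i, (g i w)^2) z v)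
      = fun z => ∑ i, 2 * g i z * fderiv ℝ (g i) z v :=
    funext fun z => aux_sumsq_fderiv (fun i => (hg i z).differentiableAt two_ne_zero) v
  rw [hfun]
  have hdiffg : ∀ i, DifferentiableAt ℝ (g i) y :=
    fun i => (hg i y).differentiableAt two_ne_zero
  have hdiffh : ∀ i, DifferentiableAt ℝ (fun z => fderiv ℝ (g i) z v) y :=
    fun i => (aux_dF_contDiffAt (hg i y) v).differentiableAt one_ne_zero
  rw [fderiv_fun_sum (fun i _ => (((hdiffg i).const_mul 2).fun_mul (hdiffh i)))]
  simp only [ContinuousLinearMap.sum_apply]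
  refine Finset.sum_congr rfl (fun i _ => ?_)
  rw [fderiv_fun_mul ((hdiffg i).const_mul 2) (hdiffh i)]
  rw [fderiv_const_mul (hdiffg i)]
  simp [smul_eq_mul]
  ring

lemma aux_max_fderiv {F : E3 → ℝ} (hF : ∀ y, ContDiffAt ℝ 2 F y) {x₀ : E3}
    (hmax : ∀ y, F y ≤ F x₀) (v : E3) :
    fderiv ℝ F x₀ v = 0 ∧ fderiv ℝ (fun y => fderiv ℝ F y v) x₀ v ≤ 0 := by
  set g : ℝ → ℝ := fun s => F (x₀ + s • v) with hgdef
  set g' : ℝ → ℝ := fun s => fderiv ℝ F (x₀ + s • v) v with hg'def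
  have hg : ∀ s, HasDerivAt g (g' s) s := fun s =>
    ((hF _).differentiableAt two_ne_zero).hasFDerivAt.comp_hasDerivAt s
      (aux_line_hasDerivAt x₀ v s)
  have hg' : HasDerivAt g' (fderiv ℝ (fun y => fderiv ℝ F y v) x₀ v) 0 := by
    have h1 := ((aux_dF_contDiffAt (hF x₀) v).differentiableAt one_ne_zero).hasFDerivAt
    rw [show x₀ = x₀ + (0:ℝ) • v by simp] at h1
    have h2 := h1.comp_hasDerivAt 0 (aux_line_hasDerivAt x₀ v 0)
    simpa [Function.comp_def] using h2
  have hm : ∀ s, g s ≤ g 0 := fun s => by simpa [hgdef] using hmax (x₀ + s • v)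
  have key := aux_deriv2_nonpos hg hg' hm
  constructor
  · have := key.1
    simpa [hg'def] using this
  · exact key.2

lemma intVec_apply (k : Fin 3 → ℤ) (i : Fin 3) : intVec k i = (k i : ℝ) := by
  rw [intVec, WithLp.ofLp_sum, Finset.sum_apply]
  simp [EuclideanSpace.single_apply]

lemma aux_decomp (x : E3) : ∃ k : Fin 3 → ℤ, (∀ i, (x - intVec k) i ∈ Icc (0:ℝ) 1)
    ∧ x = (x - intVec k) + intVec k := by
  refine ⟨fun i => ⌊x i⌋, fun i => ?_, by abel⟩
  have : (x - intVec fun i => ⌊x i⌋) i = x i - ⌊x i⌋ := by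
    simp [intVec_apply]
  rw [this]
  constructor
  · linarith [Int.floor_le (x i)]
  · linarith [Int.lt_floor_add_one (x i)]

lemma aux_cube_compact : IsCompact {y : E3 | ∀ i, y i ∈ Icc (0:ℝ) 1} := by
  have hset : {y : E3 | ∀ i, y i ∈ Icc (0:ℝ) 1}
      = ⋂ i, (EuclideanSpace.proj (𝕜 := ℝ) i) ⁻¹' (Icc (0:ℝ) 1) := by
    ext y; simp [Set.mem_iInter]
  have hclosed : IsClosed {y : E3 | ∀ i, y i ∈ Icc (0:ℝ) 1} := by
    rw [hset]
    exact isClosed_iInter fun i => (isClosed_Icc).preimage (EuclideanSpace.proj i).continuous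
  refine Metric.isCompact_of_isClosed_isBounded hclosed ?_
  rw [Metric.isBounded_iff_subset_closedBall 0]
  refine ⟨2, fun y hy => ?_⟩
  simp only [Metric.mem_closedBall, dist_zero_right]
  rw [EuclideanSpace.norm_eq]
  have h1 : ∑ i, ‖y i‖^2 ≤ 3 := by
    have h2 : ∀ i : Fin 3, ‖y i‖^2 ≤ 1 := by
      intro i
      have := hy i
      rw [Real.norm_eq_abs, sq_abs]
      nlinarith [this.1, this.2]
    calc ∑ i, ‖y i‖^2 ≤ ∑ _i : Fin 3, (1:ℝ) := Finset.sum_le_sum fun i _ => h2 i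
      _ = 3 := by simp
  calc Real.sqrt (∑ i, ‖y i‖^2) ≤ Real.sqrt 4 := Real.sqrt_le_sqrt (by linarith)
    _ = 2 := by rw [show (4:ℝ) = 2^2 by norm_num, Real.sqrt_sq (by norm_num)]

lemma aux_bulk_nonneg {a b c φ t3 : ℝ} (hc : 0 < c) (hφ : 0 ≤ φ)
    (hm : b^2 - 2*a*c ≤ c^2*φ) (ht3 : t3^2 ≤ φ^3) :
    0 ≤ 2*a*φ - 2*b*t3 + 2*c*φ^2 := by
  set s := Real.sqrt φ with hs
  have hs0 : 0 ≤ s := Real.sqrt_nonneg φ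
  have hs2 : s^2 = φ := Real.sq_sqrt hφ
  have hm' : b^2 - 2*a*c ≤ c^2*s^2 := by rw [hs2]; exact hm
  have hs6 : s^6 = φ^3 := by rw [← hs2]; ring
  have ht3' : t3^2 ≤ s^6 := by rw [hs6]; exact ht3
  have habs : |b| * s ≤ a + c*s^2 := by
    nlinarith [sq_nonneg (c*s - |b|), sq_abs b, hc, mul_pos hc hc]
  have k2 : |t3| ≤ s^3 := by
    nlinarith [sq_abs t3, abs_nonneg t3, pow_nonneg hs0 3]
  have k1 : b*t3 ≤ |b| * |t3| := by rw [← abs_mul]; exact le_abs_self _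
  have k3 : |b| * |t3| ≤ |b| * s^3 := mul_le_mul_of_nonneg_left k2 (abs_nonneg b)
  have k4 : (|b| * s) * s^2 ≤ (a + c*s^2)*s^2 := mul_le_mul_of_nonneg_right habs (sq_nonneg s)
  have k5 : |b| * s^3 = |b| * s * s^2 := by ring
  rw [← hs2]
  nlinarith [k1, k3, k4, k5]


/-- Maximum principle, Lemma 4.1, smooth periodic version.
If `u, Q` are smooth on `ℝ³ × [0,T]`, `ℤ³`-periodic in space, with `div u = 0`, `Q` valued
in symmetric traceless matrices, and `Q` solves the co-rotational Q-tensor equation on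
`ℝ³ × (0,T]`, then for `0 ≤ t ≤ T`:
`|Q(x,t)| ≤ max { sup_y |Q(y,0)| , √(max(b²/c² − 2a/c, 0)) }`, where `|Q| = √(tr Q²)`. -/
theorem statement_17 (a b : ℝ) (c T : ℝ) (hc : 0 < c) (hT : 0 < T)
    (u : E3 × ℝ → Fin 3 → ℝ) (Q : E3 × ℝ → M3)
    (hu : ∀ i, ContDiffOn ℝ (⊤ : ℕ∞) (fun p => u p i) ((univ : Set E3) ×ˢ Icc (0 : ℝ) T))
    (hQ : ∀ γ δ : Fin 3, ContDiffOn ℝ (⊤ : ℕ∞) (fun p => Q p γ δ)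
      ((univ : Set E3) ×ˢ Icc (0 : ℝ) T))
    (hQsym : ∀ p : E3 × ℝ, p.2 ∈ Icc (0 : ℝ) T → (Q p).IsSymm)
    (hQtr : ∀ p : E3 × ℝ, p.2 ∈ Icc (0 : ℝ) T → (Q p).trace = 0)
    (hper_u : ∀ (k : Fin 3 → ℤ) (x : E3) (t : ℝ), u (x + intVec k, t) = u (x, t))
    (hper_Q : ∀ (k : Fin 3 → ℤ) (x : E3) (t : ℝ), Q (x + intVec k, t) = Q (x, t))
    (hdiv : ∀ p : E3 × ℝ, p.2 ∈ Icc (0 : ℝ) T → (∑ α, pdx α (fun q => u q α) p) = 0)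
    (heqQ : ∀ p : E3 × ℝ, 0 < p.2 → p.2 ≤ T → ∀ α β : Fin 3,
      pdt (fun q => Q q α β) p + (∑ γ, u p γ * pdx γ (fun q => Q q α β) p)
          - (∑ γ, omg u p α γ * Q p γ β) + (∑ γ, Q p α γ * omg u p γ β)
        = lapx (fun q => Q q α β) p - fLdG a b c (Q p) α β) :
    ∀ (x : E3) (t : ℝ), t ∈ Icc (0 : ℝ) T →
      Real.sqrt ((Q (x, t) * Q (x, t)).trace)
        ≤ max (⨆ y : E3, Real.sqrt ((Q (y, 0) * Q (y, 0)).trace))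
            (Real.sqrt (max (b ^ 2 / c ^ 2 - 2 * a / c) 0)) := by
  classical
  -- the squared norm function
  set φ : E3 × ℝ → ℝ := fun p => ∑ i : Fin 3 × Fin 3, (Q p i.1 i.2)^2 with hφdef
  have hφ0 : ∀ p, 0 ≤ φ p := fun p => Finset.sum_nonneg fun _ _ => sq_nonneg _
  have htr : ∀ p : E3 × ℝ, p.2 ∈ Icc (0:ℝ) T → (Q p * Q p).trace = φ p := by
    intro p hp
    have hsym := hQsym p hp
    simp only [hφdef, Matrix.trace, Matrix.diag, Matrix.mul_apply]
    rw [Fintype.sum_prod_type]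
    refine Finset.sum_congr rfl fun α _ => ?_
    refine Finset.sum_congr rfl fun β _ => ?_
    rw [hsym.apply α β]
    ring
  set m : ℝ := max (b ^ 2 / c ^ 2 - 2 * a / c) 0 with hmdef
  set S : ℝ := ⨆ y : E3, Real.sqrt ((Q (y, 0) * Q (y, 0)).trace) with hSdef
  set M : ℝ := max S (Real.sqrt m) with hMdef
  have hM0 : 0 ≤ M := le_trans (Real.sqrt_nonneg m) (le_max_right _ _)
  set K : ℝ := M^2 with hKdef
  have hmK : m ≤ K := by
    calc m = (Real.sqrt m)^2 := (Real.sq_sqrt (le_max_right _ 0)).symm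
      _ ≤ M^2 := pow_le_pow_left₀ (Real.sqrt_nonneg m) (le_max_right _ _) 2
  -- periodicity of φ
  have hper : ∀ (k : Fin 3 → ℤ) (x : E3) (t : ℝ), φ (x + intVec k, t) = φ (x, t) := by
    intro k x t
    simp only [hφdef, hper_Q k x t]
  -- the unit cube
  set C : Set E3 := {y : E3 | ∀ i, y i ∈ Icc (0:ℝ) 1} with hCdef
  have h0C : (0 : E3) ∈ C := fun i => ⟨le_rfl, by norm_num⟩
  have hred : ∀ x : E3, ∃ y ∈ C, ∀ t, φ (x, t) = φ (y, t) := by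
    intro x
    obtain ⟨k, hk, hx⟩ := aux_decomp x
    refine ⟨x - intVec k, hk, fun t => ?_⟩
    conv_lhs => rw [hx]
    exact hper k (x - intVec k) t
  -- continuity of φ
  have hφcont : ContinuousOn φ ((univ : Set E3) ×ˢ Icc (0:ℝ) T) := by
    apply continuousOn_finset_sum
    intro i _
    exact ((hQ i.1 i.2).continuousOn).pow 2
  -- bound at time zero
  have hSfun : (fun y : E3 => Real.sqrt ((Q (y,0) * Q (y,0)).trace))
      = fun y => Real.sqrt (φ (y,0)) :=
    funext fun y => by rw [htr (y,0) (left_mem_Icc.mpr hT.le)]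
  have hS : ∀ y : E3, Real.sqrt (φ (y, 0)) ≤ S := by
    have hc0 : Continuous (fun y : E3 => Real.sqrt (φ (y,0))) := by
      refine Real.continuous_sqrt.comp ?_
      refine hφcont.comp_continuous (continuous_id.prodMk continuous_const) ?_
      exact fun y => ⟨trivial, left_mem_Icc.mpr hT.le⟩
    have hsub : Set.range (fun y : E3 => Real.sqrt (φ (y,0)))
        ⊆ (fun y : E3 => Real.sqrt (φ (y,0))) '' C := by
      rintro _ ⟨y, rfl⟩
      obtain ⟨z, hzC, hz⟩ := hred y
      exact ⟨z, hzC, by simp only [hz 0]⟩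
    have hbdd : BddAbove (Set.range (fun y : E3 => Real.sqrt (φ (y,0)))) :=
      ((aux_cube_compact.image hc0).bddAbove).mono hsub
    intro y
    have hSeq : S = ⨆ y : E3, Real.sqrt (φ (y,0)) := by rw [hSdef, hSfun]
    rw [hSeq]
    exact le_ciSup hbdd y
  have hQ0K : ∀ y : E3, φ (y, 0) ≤ K := by
    intro y
    have h1 : Real.sqrt (φ (y,0)) ≤ M := le_trans (hS y) (le_max_left _ _)
    calc φ (y,0) = (Real.sqrt (φ (y,0)))^2 := (Real.sq_sqrt (hφ0 _)).symm
      _ ≤ M^2 := pow_le_pow_left₀ (Real.sqrt_nonneg _) h1 2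
  -- joint smoothness at interior times
  have hQC2 : ∀ (γ δ : Fin 3) (z : E3) (s : ℝ), 0 < s → s < T →
      ContDiffAt ℝ 2 (fun q : E3 × ℝ => Q q γ δ) (z, s) := by
    intro γ δ z s h1 h2
    have hmem : (univ : Set E3) ×ˢ Icc (0:ℝ) T ∈ 𝓝 ((z, s) : E3 × ℝ) :=
      prod_mem_nhds Filter.univ_mem (Icc_mem_nhds h1 h2)
    exact ((hQ γ δ).contDiffAt hmem).of_le (by norm_cast)
  -- MAIN CLAIM A : for every T' < T and ε > 0
  have claimA : ∀ T', 0 < T' → T' < T → ∀ ε, 0 < ε →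
      ∀ t ∈ Icc (0:ℝ) T', ∀ x : E3, φ (x, t) ≤ K + ε * t := by
    intro T' hT'0 hT'T ε hε
    have hKcomp : IsCompact (C ×ˢ Icc (0:ℝ) T') := aux_cube_compact.prod isCompact_Icc
    have hKne : (C ×ˢ Icc (0:ℝ) T').Nonempty := ⟨(0, 0), h0C, left_mem_Icc.mpr hT'0.le⟩
    have hsub : (C ×ˢ Icc (0:ℝ) T') ⊆ (univ : Set E3) ×ˢ Icc (0:ℝ) T :=
      Set.prod_mono (subset_univ C) (Icc_subset_Icc le_rfl hT'T.le)
    have hgc : ContinuousOn (fun p : E3 × ℝ => φ p - ε * p.2) (C ×ˢ Icc (0:ℝ) T') :=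
      (hφcont.mono hsub).sub ((continuous_const.mul continuous_snd).continuousOn)
    obtain ⟨p₀, hp₀mem, hp₀max⟩ := hKcomp.exists_isMaxOn hKne hgc
    obtain ⟨x₀, t₀⟩ := p₀
    have hmax' : ∀ q ∈ C ×ˢ Icc (0:ℝ) T', φ q - ε * q.2 ≤ φ (x₀, t₀) - ε * t₀ :=
      fun q hq => hp₀max hq
    have hx₀C : x₀ ∈ C := hp₀mem.1
    have ht₀mem : t₀ ∈ Icc (0:ℝ) T' := hp₀mem.2
    rcases le_or_gt (φ (x₀, t₀)) K with hK' | hK'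
    · intro t htt x
      obtain ⟨y, hyC, hyeq⟩ := hred x
      have h1 := hmax' (y, t) ⟨hyC, htt⟩
      have h2 : 0 ≤ ε * t₀ := mul_nonneg hε.le ht₀mem.1
      rw [hyeq t]
      simp only at h1
      linarith
    · exfalso
      have ht₀pos : 0 < t₀ := by
        rcases ht₀mem.1.lt_or_eq with h | h
        · exact h
        · exfalso
          have := hQ0K x₀
          rw [h] at this
          linarith
      have ht₀T : t₀ < T := lt_of_le_of_lt ht₀mem.2 hT'T
      -- spatial global maximality at time t₀
      have hsmax : ∀ z : E3, φ (z, t₀) ≤ φ (x₀, t₀) := by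
        intro z
        obtain ⟨y, hyC, hyeq⟩ := hred z
        have h1 := hmax' (y, t₀) ⟨hyC, ht₀mem⟩
        simp only at h1
        rw [hyeq t₀]; linarith
      -- smoothness of the spatial slices
      have hg2 : ∀ (i : Fin 3 × Fin 3) (z : E3),
          ContDiffAt ℝ 2 (fun w : E3 => Q (w, t₀) i.1 i.2) z := by
        intro i z
        have h1 : ContDiffAt ℝ 2 (fun w : E3 => ((w, t₀) : E3 × ℝ)) z :=
          (contDiff_id.prodMk contDiff_const).contDiffAt
        exact (hQC2 i.1 i.2 z t₀ ht₀pos ht₀T).comp z h1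
      have hFC2 : ∀ z : E3, ContDiffAt ℝ 2
          (fun w : E3 => ∑ i : Fin 3 × Fin 3, (Q (w, t₀) i.1 i.2)^2) z :=
        fun z => ContDiffAt.sum (fun i _ => ((hg2 i z).pow 2))
      have hFmax : ∀ z : E3,
          (fun w : E3 => ∑ i : Fin 3 × Fin 3, (Q (w, t₀) i.1 i.2)^2) z
          ≤ (fun w : E3 => ∑ i : Fin 3 × Fin 3, (Q (w, t₀) i.1 i.2)^2) x₀ :=
        fun z => hsmax z
      have hder := fun (γ : Fin 3) =>
        aux_max_fderiv (F := fun w : E3 => ∑ i : Fin 3 × Fin 3, (Q (w, t₀) i.1 i.2)^2)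
          hFC2 hFmax (EuclideanSpace.single γ 1)
      -- first spatial derivatives of φ vanish (in product form)
      have hD1 : ∀ γ : Fin 3, ∑ i : Fin 3 × Fin 3, 2 * Q (x₀, t₀) i.1 i.2
          * pdx γ (fun q => Q q i.1 i.2) (x₀, t₀) = 0 := by
        intro γ
        have h1 := (hder γ).1
        rw [aux_sumsq_fderiv (g := fun (i : Fin 3 × Fin 3) (w : E3) => Q (w, t₀) i.1 i.2)
          (fun i => (hg2 i x₀).differentiableAt two_ne_zero) (EuclideanSpace.single γ 1)] at h1
        exact h1
      -- the Laplacian term is ≤ 0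
      have hγ2 : ∀ γ : Fin 3, ∑ i : Fin 3 × Fin 3, 2 * Q (x₀, t₀) i.1 i.2
          * fderiv ℝ (fun z : E3 => fderiv ℝ (fun w : E3 => Q (w, t₀) i.1 i.2) z
              (EuclideanSpace.single γ 1)) x₀ (EuclideanSpace.single γ 1) ≤ 0 := by
        intro γ
        have h2 := (hder γ).2
        rw [aux_sumsq_fderiv2 (g := fun (i : Fin 3 × Fin 3) (w : E3) => Q (w, t₀) i.1 i.2)
          hg2 (EuclideanSpace.single γ 1)] at h2
        rw [Finset.sum_add_distrib] at h2
        have h3 : 0 ≤ ∑ i : Fin 3 × Fin 3,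
            2 * (fderiv ℝ (fun w : E3 => Q (w, t₀) i.1 i.2) x₀ (EuclideanSpace.single γ 1))^2 :=
          Finset.sum_nonneg fun i _ => by positivity
        linarith
      have hLap : ∑ i : Fin 3 × Fin 3, 2 * Q (x₀, t₀) i.1 i.2
          * lapx (fun q => Q q i.1 i.2) (x₀, t₀) ≤ 0 := by
        have h4 : ∀ i : Fin 3 × Fin 3, 2 * Q (x₀, t₀) i.1 i.2 * lapx (fun q => Q q i.1 i.2) (x₀, t₀)
            = ∑ γ : Fin 3, 2 * Q (x₀, t₀) i.1 i.2 * fderiv ℝ (fun z : E3 =>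
                fderiv ℝ (fun w : E3 => Q (w, t₀) i.1 i.2) z (EuclideanSpace.single γ 1)) x₀
                (EuclideanSpace.single γ 1) := by
          intro i
          have h5 : lapx (fun q => Q q i.1 i.2) (x₀, t₀) = ∑ γ : Fin 3,
              fderiv ℝ (fun z : E3 => fderiv ℝ (fun w : E3 => Q (w, t₀) i.1 i.2) z
                (EuclideanSpace.single γ 1)) x₀ (EuclideanSpace.single γ 1) := rfl
          rw [h5, Finset.mul_sum]
        calc ∑ i : Fin 3 × Fin 3, 2 * Q (x₀, t₀) i.1 i.2 * lapx (fun q => Q q i.1 i.2) (x₀, t₀)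
            = ∑ i : Fin 3 × Fin 3, ∑ γ : Fin 3, 2 * Q (x₀, t₀) i.1 i.2 * fderiv ℝ (fun z : E3 =>
                fderiv ℝ (fun w : E3 => Q (w, t₀) i.1 i.2) z (EuclideanSpace.single γ 1)) x₀
                (EuclideanSpace.single γ 1) := Finset.sum_congr rfl fun i _ => h4 i
          _ = ∑ γ : Fin 3, ∑ i : Fin 3 × Fin 3, 2 * Q (x₀, t₀) i.1 i.2 * fderiv ℝ (fun z : E3 =>
                fderiv ℝ (fun w : E3 => Q (w, t₀) i.1 i.2) z (EuclideanSpace.single γ 1)) x₀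
                (EuclideanSpace.single γ 1) := Finset.sum_comm
          _ ≤ 0 := Finset.sum_nonpos fun γ _ => hγ2 γ
      -- time derivative bound
      have hqt : ∀ i : Fin 3 × Fin 3, ContDiffAt ℝ 2 (fun s : ℝ => Q (x₀, s) i.1 i.2) t₀ := by
        intro i
        have h1 : ContDiffAt ℝ 2 (fun s : ℝ => ((x₀, s) : E3 × ℝ)) t₀ :=
          (contDiff_const.prodMk contDiff_id).contDiffAt
        exact (hQC2 i.1 i.2 x₀ t₀ ht₀pos ht₀T).comp t₀ h1
      have hft : HasDerivAt (fun s : ℝ => ∑ i : Fin 3 × Fin 3, (Q (x₀, s) i.1 i.2)^2)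
          (∑ i : Fin 3 × Fin 3, 2 * Q (x₀, t₀) i.1 i.2
            * pdt (fun q => Q q i.1 i.2) (x₀, t₀)) t₀ := by
        apply HasDerivAt.fun_sum
        intro i _
        have h1 : HasDerivAt (fun s : ℝ => Q (x₀, s) i.1 i.2)
            (deriv (fun s : ℝ => Q (x₀, s) i.1 i.2) t₀) t₀ :=
          ((hqt i).differentiableAt two_ne_zero).hasDerivAt
        have h2 := h1.fun_pow 2
        have h3 : pdt (fun q => Q q i.1 i.2) (x₀, t₀)
            = deriv (fun s : ℝ => Q (x₀, s) i.1 i.2) t₀ := rfl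
        rw [h3]
        convert h2 using 1
        rotate_left
        push_cast
        ring
        rfl
      have htime : ∀ s ∈ Icc (0:ℝ) t₀,
          (fun s : ℝ => ∑ i : Fin 3 × Fin 3, (Q (x₀, s) i.1 i.2)^2) s - ε * s
          ≤ (fun s : ℝ => ∑ i : Fin 3 × Fin 3, (Q (x₀, s) i.1 i.2)^2) t₀ - ε * t₀ := by
        intro s hs
        exact hmax' (x₀, s) ⟨hx₀C, hs.1, le_trans hs.2 ht₀mem.2⟩
      -- named quantities
      set A : ℝ := ∑ i : Fin 3 × Fin 3, 2 * Q (x₀, t₀) i.1 i.2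
        * pdt (fun q => Q q i.1 i.2) (x₀, t₀) with hAdef
      set B : ℝ := ∑ i : Fin 3 × Fin 3, 2 * Q (x₀, t₀) i.1 i.2
        * (∑ γ, u (x₀, t₀) γ * pdx γ (fun q => Q q i.1 i.2) (x₀, t₀)) with hBdef
      set Cr : ℝ := ∑ i : Fin 3 × Fin 3, 2 * Q (x₀, t₀) i.1 i.2
        * (∑ γ, omg u (x₀, t₀) i.1 γ * Q (x₀, t₀) γ i.2) with hCrdef
      set D : ℝ := ∑ i : Fin 3 × Fin 3, 2 * Q (x₀, t₀) i.1 i.2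
        * (∑ γ, Q (x₀, t₀) i.1 γ * omg u (x₀, t₀) γ i.2) with hDdef
      set E : ℝ := ∑ i : Fin 3 × Fin 3, 2 * Q (x₀, t₀) i.1 i.2
        * lapx (fun q => Q q i.1 i.2) (x₀, t₀) with hEdef
      set G : ℝ := ∑ i : Fin 3 × Fin 3, 2 * Q (x₀, t₀) i.1 i.2
        * fLdG a b c (Q (x₀, t₀)) i.1 i.2 with hGdef
      have hA : ε ≤ A := aux_left_deriv_ge ht₀pos hft htime
      -- transport term vanishes
      have hB : B = 0 := by
        rw [hBdef]
        have h1 : ∀ i : Fin 3 × Fin 3, 2 * Q (x₀, t₀) i.1 i.2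
            * (∑ γ, u (x₀, t₀) γ * pdx γ (fun q => Q q i.1 i.2) (x₀, t₀))
            = ∑ γ, u (x₀, t₀) γ
              * (2 * Q (x₀, t₀) i.1 i.2 * pdx γ (fun q => Q q i.1 i.2) (x₀, t₀)) := by
          intro i
          rw [Finset.mul_sum]
          exact Finset.sum_congr rfl fun γ _ => by ring
        rw [Finset.sum_congr rfl fun i _ => h1 i, Finset.sum_comm]
        refine Finset.sum_eq_zero fun γ _ => ?_
        rw [← Finset.mul_sum, hD1 γ, mul_zero]
      -- rotation terms cancel
      have hsymm : ∀ i j : Fin 3, Q (x₀, t₀) j i = Q (x₀, t₀) i j :=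
        fun i j => (hQsym (x₀, t₀) ⟨ht₀pos.le, ht₀T.le⟩).apply i j
      have hCD : Cr = D := by
        rw [hCrdef, hDdef, Fintype.sum_prod_type, Fintype.sum_prod_type]
        simp only [Fin.sum_univ_three]
        rw [hsymm 0 1, hsymm 0 2, hsymm 1 2]
        ring
      -- the bulk term
      have hφm : b^2 - 2*a*c ≤ c^2 * φ (x₀, t₀) := by
        have h1 : b^2/c^2 - 2*a/c ≤ φ (x₀, t₀) :=
          le_trans (le_trans (le_max_left _ 0) hmK) hK'.le
        have e1 : c^2*(b^2/c^2 - 2*a/c) = b^2 - 2*a*c := by field_simp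
        calc b^2 - 2*a*c = c^2*(b^2/c^2 - 2*a/c) := e1.symm
          _ ≤ c^2 * φ (x₀, t₀) := mul_le_mul_of_nonneg_left h1 (sq_nonneg c)
      set t3 : ℝ := ∑ i : Fin 3 × Fin 3, Q (x₀, t₀) i.1 i.2
        * (Q (x₀, t₀) * Q (x₀, t₀)) i.1 i.2 with ht3def
      have hφdd : φ (x₀, t₀) = ∑ α : Fin 3, ∑ β : Fin 3, (Q (x₀, t₀) α β)^2 := by
        rw [show φ (x₀, t₀) = ∑ i : Fin 3 × Fin 3, (Q (x₀, t₀) i.1 i.2)^2 from rfl,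
          Fintype.sum_prod_type]
      have ht3sq : t3^2 ≤ (φ (x₀, t₀))^3 := by
        have cs1 : t3^2 ≤ (∑ i : Fin 3 × Fin 3, (Q (x₀, t₀) i.1 i.2)^2)
            * (∑ i : Fin 3 × Fin 3, ((Q (x₀, t₀) * Q (x₀, t₀)) i.1 i.2)^2) := by
          rw [ht3def]
          exact Finset.sum_mul_sq_le_sq_mul_sq _ _ _
        have cs2 : (∑ i : Fin 3 × Fin 3, ((Q (x₀, t₀) * Q (x₀, t₀)) i.1 i.2)^2)
            ≤ (φ (x₀, t₀))^2 := by
          have hpt : ∀ i : Fin 3 × Fin 3, ((Q (x₀, t₀) * Q (x₀, t₀)) i.1 i.2)^2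
              ≤ (∑ γ, (Q (x₀, t₀) i.1 γ)^2) * (∑ γ, (Q (x₀, t₀) γ i.2)^2) := by
            intro i
            rw [Matrix.mul_apply]
            exact Finset.sum_mul_sq_le_sq_mul_sq _ _ _
          calc ∑ i : Fin 3 × Fin 3, ((Q (x₀, t₀) * Q (x₀, t₀)) i.1 i.2)^2
              ≤ ∑ i : Fin 3 × Fin 3, (∑ γ, (Q (x₀, t₀) i.1 γ)^2)
                  * (∑ γ, (Q (x₀, t₀) γ i.2)^2) := Finset.sum_le_sum fun i _ => hpt i
            _ = (∑ α : Fin 3, ∑ γ : Fin 3, (Q (x₀, t₀) α γ)^2)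
                  * (∑ β : Fin 3, ∑ γ : Fin 3, (Q (x₀, t₀) γ β)^2) := by
                rw [Fintype.sum_prod_type]
                exact (Finset.sum_mul_sum Finset.univ Finset.univ
                  (fun α : Fin 3 => ∑ γ : Fin 3, (Q (x₀, t₀) α γ)^2)
                  (fun β : Fin 3 => ∑ γ : Fin 3, (Q (x₀, t₀) γ β)^2)).symm
            _ = (φ (x₀, t₀))^2 := by
                rw [show (∑ β : Fin 3, ∑ γ : Fin 3, (Q (x₀, t₀) γ β)^2)
                    = ∑ γ : Fin 3, ∑ β : Fin 3, (Q (x₀, t₀) γ β)^2 from Finset.sum_comm,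
                  ← hφdd]
                ring
        calc t3^2 ≤ (φ (x₀, t₀)) * (∑ i : Fin 3 × Fin 3, ((Q (x₀, t₀) * Q (x₀, t₀)) i.1 i.2)^2) :=
              cs1
          _ ≤ (φ (x₀, t₀)) * (φ (x₀, t₀))^2 :=
              mul_le_mul_of_nonneg_left cs2 (hφ0 _)
          _ = (φ (x₀, t₀))^3 := by ring
      have hGval : G = 2*a*(φ (x₀, t₀)) - 2*b*t3 + 2*c*(φ (x₀, t₀))^2 := by
        have htr0 : (Q (x₀, t₀)).trace = 0 := hQtr (x₀, t₀) ⟨ht₀pos.le, ht₀T.le⟩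
        have htrQQ : (Q (x₀, t₀) * Q (x₀, t₀)).trace = φ (x₀, t₀) :=
          htr (x₀, t₀) ⟨ht₀pos.le, ht₀T.le⟩
        rw [hGdef]
        have hterm : ∀ i : Fin 3 × Fin 3,
            2 * Q (x₀, t₀) i.1 i.2 * fLdG a b c (Q (x₀, t₀)) i.1 i.2
            = 2*a*(Q (x₀, t₀) i.1 i.2)^2
              - 2*b*(Q (x₀, t₀) i.1 i.2 * (Q (x₀, t₀) * Q (x₀, t₀)) i.1 i.2)
              + 2*b*(φ (x₀, t₀)/3)*(Q (x₀, t₀) i.1 i.2 * (if i.1 = i.2 then (1:ℝ) else 0))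
              + 2*c*(φ (x₀, t₀))*(Q (x₀, t₀) i.1 i.2)^2 := by
          intro i
          simp only [fLdG, Matrix.add_apply, Matrix.sub_apply, Matrix.smul_apply,
            Matrix.one_apply, smul_eq_mul, htrQQ]
          ring
        rw [Finset.sum_congr rfl fun i _ => hterm i]
        rw [Finset.sum_add_distrib, Finset.sum_add_distrib, Finset.sum_sub_distrib]
        have e2 : ∑ i : Fin 3 × Fin 3, 2*a*(Q (x₀, t₀) i.1 i.2)^2 = 2*a*(φ (x₀, t₀)) := by
          rw [← Finset.mul_sum]
          try rw [show (∑ i : Fin 3 × Fin 3, (Q (x₀, t₀) i.1 i.2)^2) = φ (x₀, t₀) from rfl]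
        have e3 : ∑ i : Fin 3 × Fin 3, 2*b*(Q (x₀, t₀) i.1 i.2
            * (Q (x₀, t₀) * Q (x₀, t₀)) i.1 i.2) = 2*b*t3 := by
          rw [ht3def, ← Finset.mul_sum]
        have e4 : ∑ i : Fin 3 × Fin 3, 2*b*(φ (x₀, t₀)/3)*(Q (x₀, t₀) i.1 i.2
            * (if i.1 = i.2 then (1:ℝ) else 0)) = 0 := by
          rw [← Finset.mul_sum]
          have e5 : ∑ i : Fin 3 × Fin 3, Q (x₀, t₀) i.1 i.2 * (if i.1 = i.2 then (1:ℝ) else 0)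
              = (Q (x₀, t₀)).trace := by
            rw [Fintype.sum_prod_type]
            simp [Matrix.trace, Matrix.diag, Finset.sum_ite_eq, mul_ite]
          rw [e5, htr0, mul_zero]
        have e6 : ∑ i : Fin 3 × Fin 3, 2*c*(φ (x₀, t₀))*(Q (x₀, t₀) i.1 i.2)^2
            = 2*c*(φ (x₀, t₀))^2 := by
          rw [← Finset.mul_sum]
          try rw [show (∑ i : Fin 3 × Fin 3, (Q (x₀, t₀) i.1 i.2)^2) = φ (x₀, t₀) from rfl]
          try ring
        rw [e2, e3, e4, e6]
        ring
      have hGnn : 0 ≤ G := by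
        rw [hGval]
        exact aux_bulk_nonneg hc (hφ0 _) hφm ht3sq
      -- combine via the PDE
      have hkey2 : A + B - Cr + D = E - G := by
        rw [hAdef, hBdef, hCrdef, hDdef, hEdef, hGdef]
        rw [← Finset.sum_add_distrib, ← Finset.sum_sub_distrib, ← Finset.sum_add_distrib,
          ← Finset.sum_sub_distrib]
        refine Finset.sum_congr rfl fun i _ => ?_
        have heq := heqQ (x₀, t₀) ht₀pos ht₀T.le i.1 i.2
        linear_combination (2 * Q (x₀, t₀) i.1 i.2) * heq
      linarith [hA, hB, hCD, hLap, hGnn, hkey2]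

  -- interior bound
  have hint : ∀ (x : E3) (t : ℝ), 0 ≤ t → t < T → φ (x, t) ≤ K := by
    intro x t ht0 htT
    by_contra hgt
    push_neg at hgt
    set T' : ℝ := (t + T) / 2 with hT'def
    have h1 : 0 < T' := by
      rw [hT'def]; linarith
    have h2 : T' < T := by rw [hT'def]; linarith
    have h3 : t ≤ T' := by rw [hT'def]; linarith
    set ε : ℝ := (φ (x,t) - K) / (2*(T + 1)) with hεdef
    have hε : 0 < ε := div_pos (by linarith) (by linarith)
    have := claimA T' h1 h2 ε hε t ⟨ht0, h3⟩ x
    have hεt : ε * t ≤ ε * (T + 1) := mul_le_mul_of_nonneg_left (by linarith) hε.le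
    have h5 : φ (x,t) ≤ K + ε * (T+1) := by linarith
    have h6 : ε * (T+1) = (φ (x,t) - K)/2 := by
      rw [hεdef]; field_simp
    rw [h6] at h5
    linarith
  -- full bound including t = T
  have main : ∀ (x : E3) (t : ℝ), t ∈ Icc (0:ℝ) T → φ (x, t) ≤ K := by
    intro x t ht
    rcases lt_or_eq_of_le ht.2 with htT | htT
    · exact hint x t ht.1 htT
    · have ht0T : 0 < t := htT ▸ hT
      have hne : (𝓝[Ioo (0:ℝ) t] t).NeBot := right_nhdsWithin_Ioo_neBot ht0T
      have hcont : ContinuousOn (fun s => φ (x, s)) (Icc (0:ℝ) T) := by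
        refine hφcont.comp ((continuous_const.prodMk continuous_id).continuousOn) ?_
        exact fun s hs => ⟨trivial, hs⟩
      have htd : Filter.Tendsto (fun s => φ (x, s)) (𝓝[Ioo (0:ℝ) t] t) (𝓝 (φ (x, t))) :=
        (hcont t ht).mono (fun s hs => ⟨hs.1.le, hs.2.le.trans ht.2⟩)
      refine le_of_tendsto htd ?_
      filter_upwards [self_mem_nhdsWithin] with s hs
      exact hint x s hs.1.le (lt_of_lt_of_le hs.2 ht.2)
  -- conclusion
  intro x t ht
  rw [htr (x, t) ht]
  calc Real.sqrt (φ (x,t)) ≤ Real.sqrt K := Real.sqrt_le_sqrt (main x t ht)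
    _ = M := by rw [hKdef, Real.sqrt_sq hM0]
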